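/- Let R, β₁ be sufficiently large. There exist ε, δ > 0 such that: if b is a function on the exterior region B_R^c = {x ∈ R^3 : |x| > R} with sup_{x∈B_R^c} |x|^{β₁} |b(x)| < δ, then any solution u of −Δu + b(x)u + u^5 = 0 on B_R^c with u ≥ 1 on ∂B_R satisfies |u(x)| ≥ ε/|x| for all x ∈ B_R^c. -/

import Mathlib

open MeasureTheory

open Filter Real Set Metric Topology

noncomputable section

abbrev E3 := EuclideanSpace ℝ (Fin 3)

/-- The Laplacian on `ℝ³`, as the sum of second partial derivatives. -/
def lap (f : E3 → ℝ) (x : E3) : ℝ :=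
  ∑ i : Fin 3,
    fderiv ℝ (fun y => fderiv ℝ f y (EuclideanSpace.single i 1)) x (EuclideanSpace.single i 1)

lemma lap_neg (f : E3 → ℝ) (x : E3) : lap (fun y => -(f y)) x = - lap f x := by
  unfold lap
  rw [← Finset.sum_neg_distrib]
  refine Finset.sum_congr rfl fun i _ => ?_
  have h1 : (fun y => fderiv ℝ (fun z => -(f z)) y (EuclideanSpace.single i 1)) =
      fun y => -(fderiv ℝ f y (EuclideanSpace.single i 1)) := by
    funext y; rw [fderiv_fun_neg]; simp
  rw [h1]
  have h2 : (fun y => -(fderiv ℝ f y (EuclideanSpace.single i 1))) =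
      fun y => -((fun z => fderiv ℝ f z (EuclideanSpace.single i 1)) y) := rfl
  rw [h2, fderiv_fun_neg]; simp

lemma diffAt_fderiv_apply {f : E3 → ℝ} {x : E3} (hf : ContDiffAt ℝ 2 f x) (e : E3) :
    DifferentiableAt ℝ (fun y => fderiv ℝ f y e) x := by
  have h1 : ContDiffAt ℝ 1 (fderiv ℝ f) x := hf.fderiv_right (by norm_num)
  exact (h1.differentiableAt one_ne_zero).clm_apply (differentiableAt_const e)

lemma lap_sub {f g : E3 → ℝ} {s : Set E3} (hs : IsOpen s) {x : E3} (hx : x ∈ s)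
    (hf : ContDiffOn ℝ 2 f s) (hg : ContDiffOn ℝ 2 g s) :
    lap (fun y => f y - g y) x = lap f x - lap g x := by
  unfold lap
  rw [← Finset.sum_sub_distrib]
  refine Finset.sum_congr rfl fun i _ => ?_
  set e := EuclideanSpace.single (𝕜 := ℝ) i (1:ℝ) with he
  have hmem : s ∈ 𝓝 x := hs.mem_nhds hx
  have h1 : (fun y => fderiv ℝ (fun z => f z - g z) y e) =ᶠ[𝓝 x]
      (fun y => fderiv ℝ f y e - fderiv ℝ g y e) := by
    filter_upwards [hmem] with y hy
    have hfd : DifferentiableAt ℝ f y :=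
      (hf.contDiffAt (hs.mem_nhds hy)).differentiableAt (by norm_num)
    have hgd : DifferentiableAt ℝ g y :=
      (hg.contDiffAt (hs.mem_nhds hy)).differentiableAt (by norm_num)
    rw [fderiv_fun_sub hfd hgd]; rfl
  rw [h1.fderiv_eq]
  have h2 : DifferentiableAt ℝ (fun y => fderiv ℝ f y e) x :=
    diffAt_fderiv_apply (hf.contDiffAt hmem) e
  have h3 : DifferentiableAt ℝ (fun y => fderiv ℝ g y e) x :=
    diffAt_fderiv_apply (hg.contDiffAt hmem) e
  rw [fderiv_fun_sub h2 h3]; rfl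



/-- 1-D second derivative test: at a local min, the second derivative is nonnegative. -/
lemma second_deriv_nonneg_of_localmin {g G : ℝ → ℝ} {L : ℝ}
    (hg : ∀ᶠ t in 𝓝 (0:ℝ), HasDerivAt g (G t) t)
    (hG : HasDerivAt G L 0) (hmin : IsLocalMin g 0) : 0 ≤ L := by
  by_contra hL
  push_neg at hL
  have hG0 : G 0 = 0 := by
    have h1 : deriv g 0 = 0 := hmin.deriv_eq_zero
    have h2 : deriv g 0 = G 0 := (hg.self_of_nhds).deriv
    rw [h2] at h1; exact h1
  -- slope of G tends to L < 0
  have hslope : Tendsto (fun t => G t / t) (𝓝[>] (0:ℝ)) (𝓝 L) := by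
    have h := hasDerivAt_iff_tendsto_slope.mp hG
    have h2 := h.mono_left (nhdsWithin_mono 0 (fun t ht => by
      simp only [mem_compl_iff, mem_singleton_iff]
      exact ne_of_gt ht : Ioi (0:ℝ) ⊆ {0}ᶜ))
    refine h2.congr' ?_
    filter_upwards [self_mem_nhdsWithin] with t ht
    simp [slope, hG0, div_eq_inv_mul]
  have hGneg : ∀ᶠ t in 𝓝[>] (0:ℝ), G t < 0 := by
    have h1 : ∀ᶠ t in 𝓝[>] (0:ℝ), G t / t < L / 2 := by
      apply hslope.eventually_lt tendsto_const_nhds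
      linarith
    filter_upwards [h1, self_mem_nhdsWithin] with t ht ht'
    have ht0 : (0:ℝ) < t := ht'
    nlinarith [ht, (div_lt_iff₀ ht0).mp ht]
  -- extract a small interval
  obtain ⟨a1, ha1, hIoo⟩ := (nhdsGT_basis_of_exists_gt ⟨1, by norm_num⟩).eventually_iff.mp hGneg
  obtain ⟨a2, ha2, hg'⟩ := Metric.eventually_nhds_iff.mp hg
  obtain ⟨a3, ha3, hmin'⟩ := Metric.eventually_nhds_iff.mp hmin
  set a := min a1 (min a2 a3) / 2 with ha_def
  have ha : 0 < a := by positivity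
  have haa1 : a < a1 := by
    have : min a1 (min a2 a3) ≤ a1 := min_le_left _ _
    simp only [ha_def]; linarith
  have haa2 : a < a2 := by
    have h1 : min a1 (min a2 a3) ≤ a2 := le_trans (min_le_right _ _) (min_le_left _ _)
    simp only [ha_def]; linarith
  have haa3 : a < a3 := by
    have h1 : min a1 (min a2 a3) ≤ a3 := le_trans (min_le_right _ _) (min_le_right _ _)
    simp only [ha_def]; linarith
  -- g is strictly decreasing on [0, a]
  have hanti : StrictAntiOn g (Icc 0 a) := by
    apply strictAntiOn_of_deriv_neg (convex_Icc 0 a)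
    · intro t ht
      have : dist t 0 < a2 := by
        rw [Real.dist_eq, sub_zero, abs_of_nonneg ht.1]; linarith [ht.2]
      exact (hg' this).continuousAt.continuousWithinAt
    · intro t ht
      rw [interior_Icc] at ht
      have hd : dist t 0 < a2 := by
        rw [Real.dist_eq, sub_zero, abs_of_pos ht.1]; linarith [ht.2]
      rw [(hg' hd).deriv]
      exact hIoo ⟨ht.1, by linarith [ht.2]⟩
  have h1 : g a < g 0 := hanti (by constructor <;> [exact le_refl 0 ; exact ha.le]) (⟨ha.le, le_refl a⟩) ha
  have h2 : g 0 ≤ g a := hmin' (by rw [Real.dist_eq, sub_zero, abs_of_pos ha]; linarith)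
  linarith



lemma lap_nonneg_of_isLocalMin {f : E3 → ℝ} {s : Set E3} (hs : IsOpen s) {x : E3} (hx : x ∈ s)
    (hf : ContDiffOn ℝ 2 f s) (hmin : IsLocalMin f x) : 0 ≤ lap f x := by
  unfold lap
  apply Finset.sum_nonneg
  intro i _
  set e := EuclideanSpace.single (𝕜 := ℝ) i (1:ℝ) with he
  set l : ℝ → E3 := fun t => x + t • e with hl
  have hl0 : l 0 = x := by simp [hl]
  have hlc : Continuous l := by
    apply continuous_const.add
    exact continuous_id.smul continuous_const
  have hld : ∀ t : ℝ, HasDerivAt l e t := by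
    intro t
    have h1 : HasDerivAt (fun t : ℝ => t • e) ((1:ℝ) • e) t := (hasDerivAt_id t).smul_const e
    have h2 := h1.const_add x
    simp only [one_smul] at h2
    exact h2
  have hlt : Tendsto l (𝓝 0) (𝓝 x) := by
    have h2 := hlc.continuousAt (x := 0)
    unfold ContinuousAt at h2
    rwa [hl0] at h2
  have hmem : ∀ᶠ t in 𝓝 (0:ℝ), l t ∈ s := hlt.eventually_mem (hs.mem_nhds hx)
  have hg : ∀ᶠ t in 𝓝 (0:ℝ), HasDerivAt (fun t => f (l t)) (fderiv ℝ f (l t) e) t := by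
    filter_upwards [hmem] with t ht
    have hfd : DifferentiableAt ℝ f (l t) :=
      (hf.contDiffAt (hs.mem_nhds ht)).differentiableAt (by norm_num)
    exact hfd.hasFDerivAt.comp_hasDerivAt t (hld t)
  have hG : HasDerivAt (fun t => fderiv ℝ f (l t) e)
      (fderiv ℝ (fun y => fderiv ℝ f y e) x e) 0 := by
    have h1 : DifferentiableAt ℝ (fun y => fderiv ℝ f y e) x :=
      diffAt_fderiv_apply (hf.contDiffAt (hs.mem_nhds hx)) e
    have h2 : HasFDerivAt (fun y => fderiv ℝ f y e)
        (fderiv ℝ (fun y => fderiv ℝ f y e) x) (l 0) := by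
      rw [hl0]; exact h1.hasFDerivAt
    exact h2.comp_hasDerivAt 0 (hld 0)
  have hmin' : IsLocalMin (fun t => f (l t)) 0 := by
    have h2 := hlt.eventually hmin
    simpa [IsLocalMin, IsMinFilter, hl0] using h2
  exact second_deriv_nonneg_of_localmin hg hG hmin'

lemma lap_nonpos_of_isLocalMax {f : E3 → ℝ} {s : Set E3} (hs : IsOpen s) {x : E3} (hx : x ∈ s)
    (hf : ContDiffOn ℝ 2 f s) (hmax : IsLocalMax f x) : lap f x ≤ 0 := by
  have h1 : ContDiffOn ℝ 2 (fun y => -(f y)) s := hf.neg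
  have h2 := lap_nonneg_of_isLocalMin hs hx h1 hmax.neg
  rw [lap_neg] at h2
  linarith

local notation "⟪" a ", " b "⟫" => @inner ℝ _ _ a b

lemma hasFDerivAt_qc (c y : E3) :
    HasFDerivAt (fun z : E3 => ‖z - c‖ ^ 2) (2 • (innerSL ℝ (y - c))) y := by
  have h1 : HasFDerivAt (fun z : E3 => z - c) (ContinuousLinearMap.id ℝ E3) y :=
    (hasFDerivAt_id y).sub_const c
  have h2 := h1.norm_sq
  simpa using h2

lemma sum_coord_sq (v : E3) : ∑ i : Fin 3, (v i) ^ 2 = ‖v‖ ^ 2 := by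
  rw [← real_inner_self_eq_norm_sq]
  rw [PiLp.inner_apply]
  simp [sq]

lemma lap_radial {gf g1 g2 : ℝ → ℝ} (c x : E3) {U : Set ℝ} (hU : IsOpen U)
    (hq : ‖x - c‖ ^ 2 ∈ U)
    (hg : ∀ t ∈ U, HasDerivAt gf (g1 t) t)
    (hg1 : ∀ t ∈ U, HasDerivAt g1 (g2 t) t) :
    lap (fun y => gf (‖y - c‖ ^ 2)) x
      = 6 * g1 (‖x - c‖ ^ 2) + 4 * (‖x - c‖ ^ 2) * g2 (‖x - c‖ ^ 2) := by
  have hqcont : Continuous fun y : E3 => ‖y - c‖ ^ 2 :=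
    ((continuous_id.sub continuous_const).norm).pow 2
  have hU' : (fun y : E3 => ‖y - c‖ ^ 2) ⁻¹' U ∈ 𝓝 x :=
    hqcont.continuousAt.preimage_mem_nhds (hU.mem_nhds hq)
  -- the first derivative, on a neighborhood of x
  have hfd : ∀ y : E3, ‖y - c‖ ^ 2 ∈ U →
      HasFDerivAt (fun z => gf (‖z - c‖ ^ 2))
        (g1 (‖y - c‖ ^ 2) • (2 • (innerSL ℝ (y - c)))) y := by
    intro y hy
    exact (hg _ hy).comp_hasFDerivAt y (hasFDerivAt_qc c y)
  unfold lap
  have hterm : ∀ i : Fin 3,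
      fderiv ℝ (fun y => fderiv ℝ (fun z => gf (‖z - c‖ ^ 2)) y (EuclideanSpace.single i 1)) x
        (EuclideanSpace.single i 1)
      = 2 * g1 (‖x - c‖ ^ 2) + 4 * g2 (‖x - c‖ ^ 2) * ((x - c) i) ^ 2 := by
    intro i
    set e : E3 := EuclideanSpace.single (𝕜 := ℝ) i (1:ℝ) with he
    have hev : (fun y => fderiv ℝ (fun z => gf (‖z - c‖ ^ 2)) y e)
        =ᶠ[𝓝 x] (fun y => g1 (‖y - c‖ ^ 2) * (2 * ⟪y - c, e⟫)) := by
      filter_upwards [hU'] with y hy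
      rw [(hfd y hy).fderiv]
      simp only [ContinuousLinearMap.smul_apply, innerSL_apply_apply, smul_eq_mul]
      ring
    rw [hev.fderiv_eq]
    -- derivative of the product
    have h1 : HasFDerivAt (fun y : E3 => g1 (‖y - c‖ ^ 2))
        (g2 (‖x - c‖ ^ 2) • (2 • (innerSL ℝ (x - c)))) x :=
      (hg1 _ hq).comp_hasFDerivAt x (hasFDerivAt_qc c x)
    have h2 : HasFDerivAt (fun y : E3 => (2:ℝ) * ⟪y - c, e⟫)
        (2 • ((innerSL ℝ e).comp (ContinuousLinearMap.id ℝ E3))) x := by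
      have h3 : HasFDerivAt (fun y : E3 => y - c) (ContinuousLinearMap.id ℝ E3) x :=
        (hasFDerivAt_id x).sub_const c
      have h4 := ((innerSL ℝ e).hasFDerivAt (x := x - c)).comp x h3
      have h5 : (fun y : E3 => (innerSL ℝ e) (y - c)) = fun y : E3 => ⟪e, y - c⟫ := rfl
      have h6 : (fun y : E3 => (2:ℝ) * ⟪y - c, e⟫) = fun y : E3 => (2:ℝ) * ⟪e, y - c⟫ := by
        funext y; rw [real_inner_comm]
    -- 2 * (linear functional)
      have h7 := h4.const_mul (2:ℝ)
      rw [h6]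
      refine h7.congr_fderiv ?_
      ext w
      simp [two_smul]
    have h8 := h1.fun_mul h2
    rw [h8.fderiv]
    simp [ContinuousLinearMap.smul_apply, he, EuclideanSpace.inner_single_right]
    ring
  rw [Finset.sum_congr rfl (fun i _ => hterm i)]
  rw [Finset.sum_add_distrib]
  simp only [Finset.sum_const, Finset.card_univ, Fintype.card_fin, nsmul_eq_mul,
    ← Finset.mul_sum]
  rw [sum_coord_sq]
  ring

def gphi (a b t : ℝ) : ℝ := a * t ^ (-(1:ℝ)/2) + b * t ^ (-1:ℝ)
def gphi1 (a b t : ℝ) : ℝ := a * (-(1:ℝ)/2) * t ^ (-(3:ℝ)/2) + b * (-1) * t ^ (-(2:ℝ))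
def gphi2 (a b t : ℝ) : ℝ := a * ((3:ℝ)/4) * t ^ (-(5:ℝ)/2) + b * 2 * t ^ (-(3:ℝ))

lemma hasDerivAt_gphi {t : ℝ} (a b : ℝ) (ht : 0 < t) :
    HasDerivAt (gphi a b) (gphi1 a b t) t := by
  have h1 := (hasDerivAt_rpow_const (p := -(1:ℝ)/2) (Or.inl ht.ne')).const_mul a
  have h2 := (hasDerivAt_rpow_const (p := (-1:ℝ)) (Or.inl ht.ne')).const_mul b
  have h3 := h1.add h2
  have e1 : (-(1:ℝ)/2 - 1) = -(3:ℝ)/2 := by norm_num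
  have e2 : ((-1:ℝ) - 1) = -(2:ℝ) := by norm_num
  rw [e1] at h3
  rw [e2] at h3
  refine h3.congr_deriv ?_
  unfold gphi1
  ring

lemma hasDerivAt_gphi1 {t : ℝ} (a b : ℝ) (ht : 0 < t) :
    HasDerivAt (gphi1 a b) (gphi2 a b t) t := by
  have h1 := (hasDerivAt_rpow_const (p := -(3:ℝ)/2) (Or.inl ht.ne')).const_mul (a * (-(1:ℝ)/2))
  have h2 := (hasDerivAt_rpow_const (p := (-(2:ℝ))) (Or.inl ht.ne')).const_mul (b * (-1))
  have h3 := h1.add h2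
  have e1 : (-(3:ℝ)/2 - 1) = -(5:ℝ)/2 := by norm_num
  have e2 : ((-(2:ℝ)) - 1) = -(3:ℝ) := by norm_num
  rw [e1] at h3
  rw [e2] at h3
  refine h3.congr_deriv ?_
  unfold gphi2
  ring

lemma lap_gphi (a b : ℝ) (c x : E3) (hx : 0 < ‖x - c‖ ^ 2) :
    lap (fun y => gphi a b (‖y - c‖ ^ 2)) x = 2 * b * (‖x - c‖ ^ 2) ^ (-(2:ℝ)) := by
  set q := ‖x - c‖ ^ 2 with hqdef
  have h := lap_radial (gf := gphi a b) (g1 := gphi1 a b) (g2 := gphi2 a b) c x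
    isOpen_Ioi hx (fun t ht => hasDerivAt_gphi a b ht) (fun t ht => hasDerivAt_gphi1 a b ht)
  rw [h]
  unfold gphi1 gphi2
  have e1 : q ^ (-(3:ℝ)/2) = q * q ^ (-(5:ℝ)/2) := by
    rw [show -(3:ℝ)/2 = 1 + (-(5:ℝ)/2) by norm_num, Real.rpow_add hx, Real.rpow_one]
  have e2 : q ^ (-(2:ℝ)) = q * q ^ (-(3:ℝ)) := by
    rw [show -(2:ℝ) = 1 + (-(3:ℝ)) by norm_num, Real.rpow_add hx, Real.rpow_one]
  rw [e1, e2]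
  ring


def gpsi (A r t : ℝ) : ℝ := A * (r^2 - t) ^ (-(1:ℝ)/2)
def gpsi1 (A r t : ℝ) : ℝ := A * ((1:ℝ)/2) * (r^2 - t) ^ (-(3:ℝ)/2)
def gpsi2 (A r t : ℝ) : ℝ := A * ((3:ℝ)/4) * (r^2 - t) ^ (-(5:ℝ)/2)

lemma hasDerivAt_sub_id (r t : ℝ) : HasDerivAt (fun s : ℝ => r^2 - s) (-1) t := by
  simpa using (hasDerivAt_id t).const_sub (r^2)

lemma hasDerivAt_gpsi {t : ℝ} (A r : ℝ) (ht : t < r^2) :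
    HasDerivAt (gpsi A r) (gpsi1 A r t) t := by
  have hne : r^2 - t ≠ 0 := by linarith
  have h1 := (hasDerivAt_rpow_const (p := -(1:ℝ)/2) (Or.inl hne)).comp t (hasDerivAt_sub_id r t)
  have h2 := h1.const_mul A
  refine h2.congr_deriv ?_
  unfold gpsi1
  rw [show -(1:ℝ)/2 - 1 = -(3:ℝ)/2 by norm_num]
  ring

lemma hasDerivAt_gpsi1 {t : ℝ} (A r : ℝ) (ht : t < r^2) :
    HasDerivAt (gpsi1 A r) (gpsi2 A r t) t := by
  have hne : r^2 - t ≠ 0 := by linarith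
  have h1 := (hasDerivAt_rpow_const (p := -(3:ℝ)/2) (Or.inl hne)).comp t (hasDerivAt_sub_id r t)
  have h2 := h1.const_mul (A * ((1:ℝ)/2))
  refine h2.congr_deriv ?_
  unfold gpsi2
  rw [show -(3:ℝ)/2 - 1 = -(5:ℝ)/2 by norm_num]
  ring

lemma lap_gpsi (A r : ℝ) (c x : E3) (hx : ‖x - c‖ ^ 2 < r^2) :
    lap (fun y => gpsi A r (‖y - c‖ ^ 2)) x
      = 3 * A * (r^2 - ‖x - c‖ ^ 2) ^ (-(3:ℝ)/2)
        + 3 * A * (‖x - c‖ ^ 2) * (r^2 - ‖x - c‖ ^ 2) ^ (-(5:ℝ)/2) := by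
  have h := lap_radial (gf := gpsi A r) (g1 := gpsi1 A r) (g2 := gpsi2 A r) c x
    isOpen_Iio hx (fun t ht => hasDerivAt_gpsi A r ht) (fun t ht => hasDerivAt_gpsi1 A r ht)
  rw [h]
  unfold gpsi1 gpsi2
  ring

lemma contDiffAt_gphi_comp {a b : ℝ} {c x : E3} (h : ‖x - c‖ ^ 2 ≠ 0) :
    ContDiffAt ℝ 2 (fun y => gphi a b (‖y - c‖ ^ 2)) x := by
  have hq : ContDiffAt ℝ 2 (fun y : E3 => ‖y - c‖ ^ 2) x :=
    ((contDiff_id.sub contDiff_const).norm_sq ℝ).contDiffAt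
  have hg : ContDiffAt ℝ 2 (gphi a b) (‖x - c‖ ^ 2) := by
    unfold gphi
    exact (contDiffAt_const.mul (contDiffAt_rpow_const_of_ne h)).add
      (contDiffAt_const.mul (contDiffAt_rpow_const_of_ne h))
  exact hg.comp x hq

lemma contDiffAt_gpsi_comp {A r : ℝ} {c x : E3} (h : ‖x - c‖ ^ 2 < r^2) :
    ContDiffAt ℝ 2 (fun y => gpsi A r (‖y - c‖ ^ 2)) x := by
  have hq : ContDiffAt ℝ 2 (fun y : E3 => ‖y - c‖ ^ 2) x :=
    ((contDiff_id.sub contDiff_const).norm_sq ℝ).contDiffAt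
  have hg : ContDiffAt ℝ 2 (gpsi A r) (‖x - c‖ ^ 2) := by
    unfold gpsi
    have hne : r^2 - ‖x - c‖ ^ 2 ≠ 0 := by linarith
    exact contDiffAt_const.mul ((contDiffAt_rpow_const_of_ne hne).comp _
      (contDiffAt_const.sub contDiffAt_id))
  exact hg.comp (f := fun y : E3 => ‖y - c‖ ^ 2) x hq

lemma rpow_fourth {w : ℝ} (hw : 0 ≤ w) : (w ^ (4:ℕ)) ^ ((1:ℝ)/4) = w := by
  rw [← Real.rpow_natCast w 4, ← Real.rpow_mul hw]
  norm_num

set_option maxHeartbeats 1000000 in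
lemma osserman {δ' ρ : ℝ} {b v : E3 → ℝ} {x₀ : E3}
    (hρ : 0 < ρ) (hδ'0 : 0 < δ')
    (hb : ∀ y ∈ ball x₀ ρ, |b y| ≤ δ')
    (hcont : ContinuousOn v (closedBall x₀ ρ))
    (hsmooth : ContDiffOn ℝ 2 v (ball x₀ ρ))
    (heqn : ∀ y ∈ ball x₀ ρ, lap v y = b y * v y + v y ^ 5) :
    v x₀ ≤ (12 * ρ^2) ^ ((1:ℝ)/4) / ρ + (2*δ') ^ ((1:ℝ)/4) := by
  by_contra hcon
  push_neg at hcon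
  obtain ⟨A, hAdef⟩ : ∃ a : ℝ, a = (12 * ρ^2) ^ ((1:ℝ)/4) := ⟨_, rfl⟩
  have hA0 : 0 < A := by rw [hAdef]; exact Real.rpow_pos_of_pos (by positivity) _
  have hA4 : A ^ (4:ℕ) = 12 * ρ^2 := by
    rw [hAdef, ← Real.rpow_natCast ((12*ρ^2) ^ ((1:ℝ)/4)) 4, ← Real.rpow_mul (by positivity)]
    norm_num
  rw [← hAdef] at hcon
  obtain ⟨ψ, hψdef⟩ : ∃ p : E3 → ℝ, p = fun y => gpsi A ρ (‖y - x₀‖ ^ 2) := ⟨_, rfl⟩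
  have hψx₀ : ψ x₀ = A / ρ := by
    have h1 : ((ρ:ℝ)^2) ^ (-(1:ℝ)/2) = ρ⁻¹ := by
      rw [← Real.rpow_natCast ρ 2, ← Real.rpow_mul hρ.le]
      norm_num [Real.rpow_neg_one]
    simp only [hψdef, gpsi, sub_self, norm_zero]
    rw [show (0:ℝ)^2 = 0 by norm_num, sub_zero, h1]
    rw [div_eq_mul_inv]
  have hψpos : ∀ y ∈ ball x₀ ρ, 0 < ψ y := by
    intro y hy
    have h1 : ‖y - x₀‖ ^ 2 < ρ^2 := by
      have := mem_ball_iff_norm.mp hy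
      have h2 : (0:ℝ) ≤ ‖y - x₀‖ := norm_nonneg _
      nlinarith
    rw [hψdef]
    exact mul_pos hA0 (Real.rpow_pos_of_pos (by linarith) _)
  -- the max of v on the closed ball
  obtain ⟨z, hz, hzmax⟩ := (isCompact_closedBall x₀ ρ).exists_isMaxOn
    ⟨x₀, mem_closedBall_self hρ.le⟩ hcont
  obtain ⟨M, hM⟩ : ∃ m, m = v z := ⟨_, rfl⟩
  obtain ⟨m₀, hm₀def⟩ : ∃ m, m = v x₀ - A / ρ := ⟨_, rfl⟩
  have h2δpos : 0 < (2*δ') ^ ((1:ℝ)/4) := Real.rpow_pos_of_pos (by linarith) _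
  have hm₀ : (2*δ') ^ ((1:ℝ)/4) < m₀ := by rw [hm₀def]; linarith
  have hm₀pos : 0 < m₀ := lt_trans h2δpos hm₀
  obtain ⟨cc, hccdef⟩ : ∃ c, c = max (M - m₀) (A/ρ) := ⟨_, rfl⟩
  have hcc : 0 < cc := by
    rw [hccdef]
    exact lt_of_lt_of_le (by positivity) (le_max_right _ _)
  have hAcc : A / cc ≤ ρ := by
    have h1 : A/ρ ≤ cc := by rw [hccdef]; exact le_max_right _ _
    rw [div_le_iff₀ hcc]
    rw [div_le_iff₀ hρ] at h1
    linarith [mul_comm ρ cc]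
  have hAccpos : 0 < A / cc := by positivity
  obtain ⟨ρ', hρ'def⟩ : ∃ r, r = Real.sqrt (ρ^2 - (A/cc)^2) := ⟨_, rfl⟩
  have hρ'0 : 0 ≤ ρ' := by rw [hρ'def]; exact Real.sqrt_nonneg _
  have hsqarg : 0 ≤ ρ^2 - (A/cc)^2 := by nlinarith
  have hρ'sq : ρ'^2 = ρ^2 - (A/cc)^2 := by rw [hρ'def]; exact Real.sq_sqrt hsqarg
  have hρ'lt : ρ' < ρ := by
    rw [hρ'def]
    refine (Real.sqrt_lt' hρ).mpr ?_
    nlinarith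
  -- outside the closed ball of radius ρ', v - ψ is below m₀
  have key : ∀ y ∈ ball x₀ ρ, ρ' < dist y x₀ → v y - ψ y < m₀ := by
    intro y hy hdy
    set s2 := ‖y - x₀‖ ^ 2 with hs2def
    have hdist : dist y x₀ = ‖y - x₀‖ := dist_eq_norm y x₀
    have hs2lt : s2 < ρ^2 := by
      have := mem_ball_iff_norm.mp hy
      have h2 : (0:ℝ) ≤ ‖y - x₀‖ := norm_nonneg _
      nlinarith
    have hs2gt : ρ^2 - s2 < (A/cc)^2 := by
      have h1 : ρ' ^ 2 < ‖y - x₀‖^2 := by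
        apply pow_lt_pow_left₀ (by rw [← hdist]; exact hdy) hρ'0
        norm_num
      rw [hρ'sq] at h1
      rw [hs2def]; linarith
    have hpos : 0 < ρ^2 - s2 := by linarith
    -- ψ y > cc
    have hψy : cc < ψ y := by
      rw [hψdef]
      have h1 : (ρ^2 - s2) ^ ((1:ℝ)/2) < ((A/cc)^2) ^ ((1:ℝ)/2) :=
        Real.rpow_lt_rpow hpos.le hs2gt (by norm_num)
      have h2 : ((A/cc)^2) ^ ((1:ℝ)/2) = A/cc := by
        rw [← Real.rpow_natCast (A/cc) 2, ← Real.rpow_mul hAccpos.le]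
        norm_num
      rw [h2] at h1
      have h3 : (ρ^2 - s2) ^ (-(1:ℝ)/2) = ((ρ^2 - s2) ^ ((1:ℝ)/2))⁻¹ := by
        rw [← Real.rpow_neg hpos.le]
        norm_num
      have h4 : 0 < (ρ^2 - s2) ^ ((1:ℝ)/2) := Real.rpow_pos_of_pos hpos _
      have h5 : cc/A < ((ρ^2 - s2) ^ ((1:ℝ)/2))⁻¹ := by
        rw [lt_inv_comm₀ (by positivity) h4]
        calc (ρ^2 - s2) ^ ((1:ℝ)/2) < A/cc := h1
          _ = (cc/A)⁻¹ := by rw [inv_div]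
        
      show cc < A * (ρ^2 - s2) ^ (-(1:ℝ)/2)
      rw [h3]
      calc cc = A * (cc / A) := by field_simp
        _ < A * ((ρ^2 - s2) ^ ((1:ℝ)/2))⁻¹ := by
            exact mul_lt_mul_of_pos_left h5 hA0
    have hvy : v y ≤ M := by rw [hM]; exact hzmax (ball_subset_closedBall hy)
    have hcc2 : M - m₀ ≤ cc := by rw [hccdef]; exact le_max_left _ _
    linarith
  -- maximize v - ψ on the closed ball of radius ρ'
  have hKsub : closedBall x₀ ρ' ⊆ ball x₀ ρ := fun y hy =>
    mem_ball.mpr (lt_of_le_of_lt (mem_closedBall.mp hy) hρ'lt)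
  have hballlt : ∀ y ∈ ball x₀ ρ, ‖y - x₀‖ ^ 2 < ρ ^ 2 := by
    intro y hy
    have := mem_ball_iff_norm.mp hy
    have h2 : (0:ℝ) ≤ ‖y - x₀‖ := norm_nonneg _
    nlinarith
  have hψsmooth : ContDiffOn ℝ 2 ψ (ball x₀ ρ) := by
    rw [hψdef]
    exact fun y hy => (contDiffAt_gpsi_comp (hballlt y hy)).contDiffWithinAt
  have hvψcont : ContinuousOn (fun y => v y - ψ y) (closedBall x₀ ρ') :=
    (hcont.mono (fun y hy => ball_subset_closedBall (hKsub hy))).sub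
      ((hψsmooth.continuousOn).mono hKsub)
  obtain ⟨xs, hxsK, hxsmax⟩ := (isCompact_closedBall x₀ ρ').exists_isMaxOn
    ⟨x₀, mem_closedBall_self hρ'0⟩ hvψcont
  have hx₀K : x₀ ∈ closedBall x₀ ρ' := mem_closedBall_self hρ'0
  have hxsball : xs ∈ ball x₀ ρ := hKsub hxsK
  have hxs_ge : m₀ ≤ v xs - ψ xs := by
    have h := hxsmax hx₀K
    simp only [Set.mem_setOf_eq] at h
    rw [hψx₀] at h
    rw [hm₀def]
    linarith
  have hglobal : ∀ y ∈ ball x₀ ρ, v y - ψ y ≤ v xs - ψ xs := by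
    intro y hy
    by_cases hcase : dist y x₀ ≤ ρ'
    · exact hxsmax (mem_closedBall.mpr hcase)
    · push_neg at hcase
      have := key y hy hcase
      linarith
  have hlocmax : IsLocalMax (fun y => v y - ψ y) xs := by
    have hnb : ball x₀ ρ ∈ 𝓝 xs := isOpen_ball.mem_nhds hxsball
    filter_upwards [hnb] with y hy
    exact hglobal y hy
  have hlap := lap_nonpos_of_isLocalMax isOpen_ball hxsball (hsmooth.sub hψsmooth) hlocmax
  rw [lap_sub isOpen_ball hxsball hsmooth hψsmooth] at hlap
  -- compute lap ψ xs
  obtain ⟨t, htdef⟩ : ∃ t : ℝ, t = ‖xs - x₀‖ ^ 2 := ⟨_, rfl⟩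
  have ht : t < ρ^2 := by rw [htdef]; exact hballlt xs hxsball
  have htnn : (0:ℝ) ≤ t := by rw [htdef]; positivity
  have hrt : 0 < ρ^2 - t := by linarith
  have hlapψ : lap ψ xs = (1/4) * (ψ xs)^5 := by
    have ht' : ‖xs - x₀‖ ^ 2 < ρ^2 := by rw [← htdef]; exact ht
    have h1 := lap_gpsi A ρ x₀ xs ht'
    have h0 : lap ψ xs = 3 * A * (ρ^2 - t) ^ (-(3:ℝ)/2)
        + 3 * A * t * (ρ^2 - t) ^ (-(5:ℝ)/2) := by
      rw [hψdef, htdef]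
      exact h1
    have h2 : (ρ^2 - t) ^ (-(3:ℝ)/2) = (ρ^2 - t) * (ρ^2 - t) ^ (-(5:ℝ)/2) := by
      rw [show -(3:ℝ)/2 = 1 + (-(5:ℝ)/2) by norm_num, Real.rpow_add hrt, Real.rpow_one]
    have h3 : (ψ xs)^5 = A^5 * (ρ^2 - t) ^ (-(5:ℝ)/2) := by
      have hv : ψ xs = A * (ρ^2 - t) ^ (-(1:ℝ)/2) := by
        rw [hψdef, htdef]; rfl
      rw [hv, mul_pow, ← Real.rpow_natCast ((ρ^2 - t) ^ (-(1:ℝ)/2)) 5,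
        ← Real.rpow_mul hrt.le]
      norm_num
    have h4 : (A:ℝ)^5 = A * (12 * ρ^2) := by
      have h5 : (A:ℝ)^5 = A^(4:ℕ) * A := by ring
      rw [h5, hA4]; ring
    rw [h0, h2, h3, h4]
    ring
  have hψxs : 0 < ψ xs := hψpos xs hxsball
  have hvxs : ψ xs < v xs := by linarith
  have hvxs0 : 0 < v xs := lt_trans hψxs hvxs
  have heq := heqn xs hxsball
  have hb' := hb xs hxsball
  have hψ5 : (ψ xs)^5 ≤ (v xs)^5 := by
    apply pow_le_pow_left₀ hψxs.le hvxs.le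
  obtain ⟨w, hwdef⟩ : ∃ w, w = v xs := ⟨_, rfl⟩
  have hchain : b xs * w + w ^ 5 ≤ (1/4) * w^5 := by
    rw [hwdef, ← heq]
    calc lap v xs ≤ lap ψ xs := by linarith
      _ = (1/4) * (ψ xs)^5 := hlapψ
      _ ≤ (1/4) * (v xs)^5 := by linarith
  have hw0 : 0 < w := by rw [hwdef]; exact hvxs0
  have hbv : -(b xs * w) ≤ δ' * w := by
    have h1 : -(b xs) ≤ |b xs| := neg_le_abs _
    have h2 : -(b xs * w) = (-(b xs)) * w := by ring
    rw [h2]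
    exact mul_le_mul_of_nonneg_right (le_trans h1 hb') hw0.le
  clear hxsmax hglobal hlocmax key hψsmooth hvψcont hcont hsmooth heqn hb hzmax hlap hlapψ
  have h5 : (3/4) * w^5 ≤ δ' * w := by linarith
  have h6 : (3/4 * w^(4:ℕ)) * w ≤ δ' * w := by
    have h7 : (3/4 * w^(4:ℕ)) * w = 3/4 * w^(5:ℕ) := by ring
    rw [h7]; exact h5
  have h8 : 3/4 * w^(4:ℕ) ≤ δ' := le_of_mul_le_mul_right h6 hw0
  have hv4 : w^(4:ℕ) ≤ 2*δ' := by linarith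
  have hv14 : w ≤ (2*δ') ^ ((1:ℝ)/4) := by
    have h1 := Real.rpow_le_rpow (by positivity) hv4 (by norm_num : (0:ℝ) ≤ 1/4)
    rwa [rpow_fourth hw0.le] at h1
  have hfin : (2*δ') ^ ((1:ℝ)/4) < w := by
    have h9 : v xs - ψ xs < w := by rw [hwdef]; linarith
    calc (2*δ') ^ ((1:ℝ)/4) < m₀ := hm₀
      _ ≤ v xs - ψ xs := hxs_ge
      _ < w := h9
  linarith


lemma decay {R β₁ : ℝ} {b u : E3 → ℝ}
    (hR : 2 ≤ R) (hβ : 4 ≤ β₁)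
    (hb : ∀ y : E3, R < ‖y‖ → |b y| ≤ 1/2 * ‖y‖ ^ (-β₁))
    (huc : ContinuousOn u {x : E3 | R ≤ ‖x‖})
    (hus : ContDiffOn ℝ 2 u {x : E3 | R < ‖x‖})
    (heq : ∀ y : E3, R < ‖y‖ → lap u y = b y * u y + u y ^ 5) :
    ∀ x : E3, R < ‖x‖ → |u x| ≤ 2 / Real.sqrt ((‖x‖ - R)/2) + 2/‖x‖ := by
  intro x hx
  set r := ‖x‖ with hrdef
  have hrR : R < r := hx
  have hr0 : 0 < r := by linarith
  set ρ := (r - R)/2 with hρdef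
  have hρ0 : 0 < ρ := by rw [hρdef]; linarith
  set c := (r + R)/2 with hcdef
  have hcR : R < c := by rw [hcdef]; linarith
  have hc0 : 0 < c := by linarith
  have hc1 : 1 ≤ c := by rw [hcdef]; linarith
  have hcr : r/2 ≤ c := by rw [hcdef]; linarith
  have hball : ∀ y ∈ closedBall x ρ, c ≤ ‖y‖ := by
    intro y hy
    have h1 : dist y x ≤ ρ := mem_closedBall.mp hy
    have h2 : ‖x‖ - ‖y‖ ≤ ‖x - y‖ := norm_sub_norm_le x y
    have h3 : ‖x - y‖ = dist y x := by rw [dist_comm, dist_eq_norm]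
    have h4 : c = r - ρ := by rw [hcdef, hρdef]; ring
    rw [h4]; rw [h3] at h2
    linarith
  have hballR : ∀ y ∈ closedBall x ρ, R < ‖y‖ := fun y hy => lt_of_lt_of_le hcR (hball y hy)
  have hδ'0 : 0 < 1/2 * c ^ (-β₁) := by
    have := Real.rpow_pos_of_pos hc0 (-β₁)
    linarith
  have hbδ : ∀ y ∈ ball x ρ, |b y| ≤ 1/2 * c ^ (-β₁) := by
    intro y hy
    have hy' : R < ‖y‖ := hballR y (ball_subset_closedBall hy)
    have h1 : |b y| ≤ 1/2 * ‖y‖ ^ (-β₁) := hb y hy'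
    have h2 : ‖y‖ ^ (-β₁) ≤ c ^ (-β₁) := by
      have h3 : c ^ β₁ ≤ ‖y‖ ^ β₁ :=
        Real.rpow_le_rpow hc0.le (hball y (ball_subset_closedBall hy)) (by linarith)
      rw [Real.rpow_neg (norm_nonneg y), Real.rpow_neg hc0.le]
      have h4 : 0 < c ^ β₁ := Real.rpow_pos_of_pos hc0 _
      exact inv_anti₀ h4 h3
    linarith
  have hcont' : ContinuousOn u (closedBall x ρ) :=
    huc.mono (fun y hy => le_of_lt (hballR y hy))
  have hsm' : ContDiffOn ℝ 2 u (ball x ρ) :=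
    hus.mono (fun y hy => hballR y (ball_subset_closedBall hy))
  have heq' : ∀ y ∈ ball x ρ, lap u y = b y * u y + u y ^ 5 := fun y hy =>
    heq y (hballR y (ball_subset_closedBall hy))
  have h1 := osserman hρ0 hδ'0 hbδ hcont' hsm' heq'
  have h2 : -(u x) ≤ (12 * ρ^2) ^ ((1:ℝ)/4) / ρ + (2*(1/2 * c ^ (-β₁))) ^ ((1:ℝ)/4) := by
    have hcontn : ContinuousOn (fun y => -(u y)) (closedBall x ρ) := hcont'.neg
    have hsmn : ContDiffOn ℝ 2 (fun y => -(u y)) (ball x ρ) := hsm'.neg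
    have heqn : ∀ y ∈ ball x ρ, lap (fun z => -(u z)) y = b y * (-(u y)) + (-(u y)) ^ 5 := by
      intro y hy
      rw [lap_neg, heq' y hy]
      ring
    exact osserman hρ0 hδ'0 hbδ hcontn hsmn heqn
  -- bound the two terms
  have hsρ : 0 < Real.sqrt ρ := Real.sqrt_pos.mpr hρ0
  have B1 : (12 * ρ^2) ^ ((1:ℝ)/4) / ρ ≤ 2 / Real.sqrt ρ := by
    have e1 : ((2*Real.sqrt ρ)^(4:ℕ)) = 16*ρ^2 := by
      rw [mul_pow, show (Real.sqrt ρ)^(4:ℕ) = ((Real.sqrt ρ)^2)^2 by ring, Real.sq_sqrt hρ0.le]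
      norm_num
    have e2 : (12*ρ^2) ^ ((1:ℝ)/4) ≤ 2*Real.sqrt ρ := by
      calc (12*ρ^2) ^ ((1:ℝ)/4) ≤ ((2*Real.sqrt ρ)^(4:ℕ)) ^ ((1:ℝ)/4) := by
            apply Real.rpow_le_rpow (by positivity) _ (by norm_num)
            rw [e1]; nlinarith
        _ = 2*Real.sqrt ρ := rpow_fourth (by positivity)
    have e3 : 2*Real.sqrt ρ/ρ = 2/Real.sqrt ρ := by
      rw [div_eq_div_iff hρ0.ne' hsρ.ne', mul_assoc, Real.mul_self_sqrt hρ0.le]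
    rw [← e3]
    gcongr
  have B2 : (2*(1/2 * c ^ (-β₁))) ^ ((1:ℝ)/4) ≤ 2/r := by
    have e4 : 2*(1/2 * c ^ (-β₁)) = c ^ (-β₁) := by ring
    have e5 : (c ^ (-β₁)) ^ ((1:ℝ)/4) = c ^ (-β₁ * ((1:ℝ)/4)) :=
      (Real.rpow_mul hc0.le (-β₁) ((1:ℝ)/4)).symm
    have e6 : c ^ (-β₁ * ((1:ℝ)/4)) ≤ c ^ (-(1:ℝ)) :=
      Real.rpow_le_rpow_of_exponent_le hc1 (by linarith)
    have e7 : c ^ (-(1:ℝ)) = c⁻¹ := Real.rpow_neg_one c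
    have e8 : c⁻¹ ≤ 2/r := by
      have h9 : c⁻¹ ≤ (r/2)⁻¹ := inv_anti₀ (by linarith) hcr
      have h10 : ((r:ℝ)/2)⁻¹ = 2/r := by
        rw [inv_div]
      linarith
    rw [e4, e5]
    calc c ^ (-β₁ * ((1:ℝ)/4)) ≤ c ^ (-(1:ℝ)) := e6
      _ = c⁻¹ := e7
      _ ≤ 2/r := e8
  have hfin1 : u x ≤ 2/Real.sqrt ρ + 2/r := by linarith
  have hfin2 : -(u x) ≤ 2/Real.sqrt ρ + 2/r := by linarith
  have hfin : |u x| ≤ 2/Real.sqrt ρ + 2/r := abs_le.mpr ⟨by linarith, hfin1⟩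
  exact hfin

/-- Pointwise inequality at an interior minimum of `u - φ`. -/
lemma pointP {c1 c2 r m b₀ u₀ φ₀ : ℝ}
    (hr1 : 1 ≤ r) (hm : m = (r^4)⁻¹)
    (hb : |b₀| ≤ 1/2 * m)
    (hu : u₀ < φ₀) (hφ : φ₀ ≤ 2*c1/r)
    (hc1 : 0 < c1)
    (h2c2 : 1 ≤ 2*c2)
    (hstep : c1/r + 32*c1^5/r < 2*c2) :
    b₀*u₀ + u₀^5 < 2*c2*m := by
  have hr0 : 0 < r := by linarith
  have hm0 : 0 < m := by rw [hm]; positivity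
  have hm1 : m ≤ 1 := by
    rw [hm]
    have h1 : (1:ℝ) ≤ r^4 := one_le_pow₀ hr1
    exact inv_le_one_of_one_le₀ h1
  have hRHS : m ≤ 2*c2*m := by nlinarith
  have habs : b₀*u₀ ≤ |b₀| * |u₀| := by
    calc b₀*u₀ ≤ |b₀*u₀| := le_abs_self _
      _ = |b₀| * |u₀| := abs_mul _ _
  rcases le_or_gt u₀ (-1) with h|h
  · -- u₀ ≤ -1
    have habs2 : |u₀| = -u₀ := abs_of_neg (by linarith)
    have h4 : 1 ≤ u₀^2 := by nlinarith
    have h4' : 1 ≤ u₀^4 := by nlinarith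
    have hu5 : u₀^5 ≤ u₀ := by nlinarith
    have hb2 : b₀*u₀ ≤ 1/2 * m * (-u₀) := by
      rw [habs2] at habs
      have := mul_le_mul_of_nonneg_right hb (by linarith : (0:ℝ) ≤ -u₀)
      linarith
    nlinarith
  rcases le_or_gt u₀ 0 with h0|h0
  · -- -1 < u₀ ≤ 0
    have habs2 : |u₀| = -u₀ := abs_of_nonpos h0
    have hb2 : b₀*u₀ ≤ 1/2 * m := by
      rw [habs2] at habs
      have h1 := mul_le_mul_of_nonneg_right hb (by linarith : (0:ℝ) ≤ -u₀)
      nlinarith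
    have hu5 : u₀^5 ≤ 0 := by
      have h5 : u₀^5 = u₀ * (u₀^2)^2 := by ring
      rw [h5]
      exact mul_nonpos_of_nonpos_of_nonneg h0 (by positivity)
    nlinarith
  · -- 0 < u₀
    have hB : 0 < 2*c1/r := by positivity
    have huB : u₀ ≤ 2*c1/r := le_of_lt (lt_of_lt_of_le hu hφ)
    have hu5 : u₀^5 ≤ (2*c1/r)^5 := pow_le_pow_left₀ h0.le huB 5
    have hbu : b₀*u₀ ≤ 1/2 * m * (2*c1/r) := by
      have h1 : |u₀| = u₀ := abs_of_pos h0
      rw [h1] at habs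
      have h2 : |b₀| * u₀ ≤ (1/2*m) * u₀ := mul_le_mul_of_nonneg_right hb h0.le
      have h3 : (1/2*m) * u₀ ≤ (1/2*m) * (2*c1/r) :=
        mul_le_mul_of_nonneg_left huB (by positivity)
      linarith
    have hB5 : (2*c1/r)^5 = (32*c1^5/r) * m * (1/1) := by
      rw [hm]
      field_simp
      ring
    have hfinal : 1/2 * m * (2*c1/r) + (32*c1^5/r) * m < 2*c2*m := by
      have h1 : 1/2 * m * (2*c1/r) = (c1/r) * m := by ring
      rw [h1, ← add_mul]
      exact mul_lt_mul_of_pos_right hstep hm0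
    nlinarith [hB5]

lemma sq_rpow_neg_half {r : ℝ} (hr : 0 < r) : ((r^2:ℝ)) ^ (-(1:ℝ)/2) = r⁻¹ := by
  rw [← Real.rpow_natCast r 2, ← Real.rpow_mul hr.le]
  norm_num [Real.rpow_neg_one]

lemma rpow_neg4_eq {r : ℝ} (hr : 0 < r) : r ^ (-(4:ℝ)) = (r^4)⁻¹ := by
  rw [show (-(4:ℝ)) = -(((4:ℕ)):ℝ) by norm_num, Real.rpow_neg hr.le, Real.rpow_natCast]

lemma sq_rpow_neg2 {r : ℝ} (hr : 0 < r) : ((r^2:ℝ)) ^ (-(2:ℝ)) = (r^4)⁻¹ := by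
  have h1 : ((r^2:ℝ)) ^ (-(2:ℝ)) = r ^ (-(4:ℝ)) := by
    rw [← Real.rpow_natCast r 2, ← Real.rpow_mul hr.le]
    norm_num
  rw [h1, rpow_neg4_eq hr]


set_option maxHeartbeats 1600000 in
/-- Exterior lower bound: for `R, β₁` sufficiently large there are `ε, δ > 0` such that any
solution of `−Δu + bu + u⁵ = 0` on `{|x| > R}` with small `b` and `u ≥ 1` on `∂B_R`
satisfies `|u(x)| ≥ ε/|x|`. -/
theorem stmt8 :
    ∃ R₀ β₀ : ℝ, ∀ R β₁ : ℝ, R₀ ≤ R → β₀ ≤ β₁ →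
      ∃ ε δ : ℝ, 0 < ε ∧ 0 < δ ∧
        ∀ b u : E3 → ℝ,
          (∀ x : E3, R < ‖x‖ → ‖x‖ ^ β₁ * |b x| < δ) →
          ContinuousOn u {x : E3 | R ≤ ‖x‖} →
          ContDiffOn ℝ 2 u {x : E3 | R < ‖x‖} →
          (∀ x : E3, R < ‖x‖ → -lap u x + b x * u x + u x ^ 5 = 0) →
          (∀ x : E3, ‖x‖ = R → 1 ≤ u x) →
          ∀ x : E3, R < ‖x‖ → ε / ‖x‖ ≤ |u x| := by
  refine ⟨2, 4, ?_⟩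
  intro R β₁ hR hβ
  have hR0 : (0:ℝ) < R := by linarith
  obtain ⟨s, hsdef⟩ : ∃ s, s = Real.sqrt R := ⟨_, rfl⟩
  have hs0 : 0 < s := by rw [hsdef]; exact Real.sqrt_pos.mpr hR0
  have hs2 : s^2 = R := by rw [hsdef]; exact Real.sq_sqrt hR0.le
  have hs1 : 1 ≤ s := by nlinarith
  obtain ⟨η, hηdef⟩ : ∃ η : ℝ, η = 1/(4*s) := ⟨_, rfl⟩
  have hη0 : 0 < η := by rw [hηdef]; positivity
  have hη14 : η ≤ 1/4 := by
    rw [hηdef, div_le_div_iff₀ (by positivity) (by norm_num)]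
    linarith
  refine ⟨η*R, 1/2, by positivity, by norm_num, ?_⟩
  intro b u hb huc hus heqn hbd
  have heq : ∀ y : E3, R < ‖y‖ → lap u y = b y * u y + u y ^ 5 := by
    intro y hy
    have := heqn y hy
    linarith
  have hb' : ∀ y : E3, R < ‖y‖ → |b y| ≤ 1/2 * ‖y‖ ^ (-β₁) := by
    intro y hy
    have hy0 : 0 < ‖y‖ := by linarith
    have h1 := hb y hy
    have h2 : 0 < ‖y‖ ^ β₁ := Real.rpow_pos_of_pos hy0 _
    have h3 : |b y| < 1/2 / ‖y‖ ^ β₁ := by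
      rw [lt_div_iff₀ h2]
      calc |b y| * ‖y‖ ^ β₁ = ‖y‖ ^ β₁ * |b y| := by ring
        _ < 1/2 := h1
    have h4 : ‖y‖ ^ (-β₁) = (‖y‖ ^ β₁)⁻¹ := Real.rpow_neg (norm_nonneg y) _
    rw [h4]
    rw [div_eq_mul_inv] at h3
    linarith
  have hdecay := decay (by linarith) hβ hb' huc hus heq
  -- the comparison function φ
  obtain ⟨φ, hφdef⟩ : ∃ p : E3 → ℝ, p = fun y => gphi (η*R) (η*R^2) (‖y - 0‖^2) := ⟨_, rfl⟩
  have hφval : ∀ x : E3, 0 < ‖x‖ → φ x = η*R/‖x‖ + η*R^2/‖x‖^2 := by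
    intro x hx0
    rw [hφdef]
    simp only [gphi, sub_zero]
    rw [sq_rpow_neg_half hx0, Real.rpow_neg_one]
    rw [div_eq_mul_inv, div_eq_mul_inv]
  have hφnn : ∀ x : E3, 0 < ‖x‖ → 0 ≤ φ x := by
    intro x hx0
    rw [hφval x hx0]
    positivity
  have hφbound : ∀ x : E3, R ≤ ‖x‖ → φ x ≤ 2*(η*R)/‖x‖ := by
    intro x hxR
    have hx0 : 0 < ‖x‖ := by linarith
    rw [hφval x hx0]
    have h1 : η*R^2/‖x‖^2 ≤ η*R/‖x‖ := by
      rw [div_le_div_iff₀ (by positivity) (by positivity)]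
      nlinarith [mul_le_mul_of_nonneg_left hxR (show (0:ℝ) ≤ η*R*‖x‖ by positivity)]
    have h2 : η*R/‖x‖ + η*R/‖x‖ = 2*(η*R)/‖x‖ := by ring
    linarith
  have hφboundary : ∀ x : E3, ‖x‖ = R → φ x = 2*η := by
    intro x hxR
    rw [hφval x (by rw [hxR]; linarith)]
    rw [hxR]
    field_simp
    ring
  have hφcont : ContinuousOn φ {x : E3 | R ≤ ‖x‖} := by
    rw [hφdef]
    intro y hy
    have hy0 : (0:ℝ) < ‖y‖ := by
      have : R ≤ ‖y‖ := hy
      linarith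
    have hne : ‖y - (0:E3)‖^2 ≠ 0 := by
      simp only [sub_zero]
      positivity
    exact (contDiffAt_gphi_comp hne).continuousAt.continuousWithinAt
  have hsopen : IsOpen {x : E3 | R < ‖x‖} := isOpen_lt continuous_const continuous_norm
  have hφsmooth : ContDiffOn ℝ 2 φ {x : E3 | R < ‖x‖} := by
    rw [hφdef]
    intro y hy
    have hy0 : (0:ℝ) < ‖y‖ := by
      have : R < ‖y‖ := hy
      linarith
    have hne : ‖y - (0:E3)‖^2 ≠ 0 := by
      simp only [sub_zero]
      positivity
    exact (contDiffAt_gphi_comp hne).contDiffWithinAt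
  have hlapφ : ∀ x : E3, R < ‖x‖ → lap φ x = 2*(η*R^2)*(‖x‖^4)⁻¹ := by
    intro x hx
    have hx0 : 0 < ‖x‖ := by linarith
    have h1 : lap φ x = 2 * (η*R^2) * (‖x - (0:E3)‖ ^ 2) ^ (-(2:ℝ)) := by
      rw [hφdef]
      apply lap_gphi
      simp only [sub_zero]
      positivity
    rw [h1]
    simp only [sub_zero]
    rw [sq_rpow_neg2 hx0]
  -- constants for the pointwise inequality
  have hc2val : η*R^2 = s^3/4 := by
    rw [hηdef, ← hs2]
    field_simp
  have hc1val : η*R = s/4 := by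
    rw [hηdef, ← hs2]
    field_simp
  have h2c2 : 1 ≤ 2*(η*R^2) := by
    rw [hc2val]
    nlinarith
  have hstep : ∀ r : ℝ, R < r → (η*R)/r + 32*(η*R)^5/r < 2*(η*R^2) := by
    intro r hrR
    have hr0 : 0 < r := by linarith
    have hrs : s^2 < r := by rw [hs2]; exact hrR
    rw [hc1val, hc2val, ← add_div, div_lt_iff₀ hr0]
    have h5 : s^5 ≤ s^3*r := by nlinarith
    have hs4 : 1 ≤ s^4 := one_le_pow₀ hs1
    nlinarith
  -- the comparison argument: u ≥ φ on the exterior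
  have main : ∀ x : E3, R < ‖x‖ → φ x ≤ u x := by
    by_contra hcon
    push_neg at hcon
    obtain ⟨x₁, hx₁R, hx₁lt⟩ := hcon
    obtain ⟨T, hTdef⟩ : ∃ T, T = φ x₁ - u x₁ := ⟨_, rfl⟩
    have hT0 : 0 < T := by rw [hTdef]; linarith
    obtain ⟨P, hPdef⟩ : ∃ P, P = R + 1 + 72/T^2 + 8/T + 8*R/T := ⟨_, rfl⟩
    have ht1 : (0:ℝ) < 72/T^2 := by positivity
    have ht2 : (0:ℝ) < 8/T := by positivity
    have ht3 : (0:ℝ) < 8*R/T := by positivity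
    have hPR : R < P := by rw [hPdef]; linarith
    have hfar : ∀ x : E3, P ≤ ‖x‖ → |u x| + φ x < T := by
      intro x hxP
      have hxR : R < ‖x‖ := lt_of_lt_of_le hPR hxP
      have hr0 : 0 < ‖x‖ := by linarith
      have h1 := hdecay x hxR
      have hxP' : R + 1 + 72/T^2 + 8/T + 8*R/T ≤ ‖x‖ := by rw [← hPdef]; exact hxP
      have ha : 2 / Real.sqrt ((‖x‖ - R)/2) < T/3 := by
        have h2 : 36/T^2 < (‖x‖ - R)/2 := by
          have h3 : 72/T^2 + 1 ≤ ‖x‖ - R := by linarith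
          have e : 36/T^2 = (72/T^2)/2 := by ring
          linarith
        have h4 : 6/T < Real.sqrt ((‖x‖ - R)/2) := by
          have h4a : Real.sqrt ((6/T)^2) = 6/T := Real.sqrt_sq (by positivity)
          rw [← h4a]
          apply Real.sqrt_lt_sqrt (by positivity)
          have e : (6/T)^2 = 36/T^2 := by ring
          linarith
        have h5 : 0 < (6:ℝ)/T := by positivity
        have h6 : 2 / Real.sqrt ((‖x‖-R)/2) < 2/(6/T) :=
          div_lt_div_of_pos_left (by norm_num) h5 h4
        have h7 : (2:ℝ)/(6/T) = T/3 := by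
          field_simp
          ring
        linarith
      have hbterm : 2/‖x‖ < T/3 := by
        have h8 : 8/T ≤ ‖x‖ := by linarith
        have h9 : 2/‖x‖ ≤ 2/(8/T) := by
          apply div_le_div_of_nonneg_left (by norm_num) ht2 h8
        have h10 : (2:ℝ)/(8/T) = T/4 := by field_simp; ring
        have h11 : T/4 < T/3 := by linarith
        linarith
      have hcterm : φ x < T/3 := by
        have hφb : φ x ≤ 2*(η*R)/‖x‖ := hφbound x (le_of_lt hxR)
        have h11 : 8*R/T ≤ ‖x‖ := by linarith
        have h12 : 2*(η*R)/‖x‖ ≤ (R/2)/‖x‖ := by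
          gcongr
          nlinarith
        have h13 : (R/2)/‖x‖ ≤ (R/2)/(8*R/T) := by
          apply div_le_div_of_nonneg_left (by positivity) ht3 h11
        have h14 : (R/2)/(8*R/T) = T/16 := by
          field_simp
          ring
        have h15 : T/16 < T/3 := by linarith
        linarith
      linarith
    have hr₁P : ‖x₁‖ < P := by
      by_contra hge
      push_neg at hge
      have h1 := hfar x₁ hge
      have h2 : -|u x₁| ≤ u x₁ := neg_abs_le _
      have h3 : T ≤ |u x₁| + φ x₁ := by rw [hTdef]; linarith
      linarith
    -- minimize w = u - φ on the compact annulus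
    obtain ⟨K, hKdef⟩ : ∃ K : Set E3, K = closedBall 0 P ∩ {y : E3 | R ≤ ‖y‖} := ⟨_, rfl⟩
    have hKc : IsCompact K := by
      rw [hKdef]
      exact (isCompact_closedBall 0 P).inter_right (isClosed_le continuous_const continuous_norm)
    have hx₁K : x₁ ∈ K := by
      rw [hKdef]
      constructor
      · exact mem_closedBall_zero_iff.mpr (le_of_lt hr₁P)
      · exact le_of_lt hx₁R
    have hwcont : ContinuousOn (fun y => u y - φ y) K := by
      have hsub : K ⊆ {y : E3 | R ≤ ‖y‖} := by rw [hKdef]; exact inter_subset_right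
      exact (huc.mono hsub).sub (hφcont.mono hsub)
    obtain ⟨x₀, hx₀K, hx₀min⟩ := hKc.exists_isMinOn ⟨x₁, hx₁K⟩ hwcont
    have hw₀ : u x₀ - φ x₀ ≤ -T := by
      have h := hx₀min hx₁K
      simp only [Set.mem_setOf_eq] at h
      rw [hTdef]
      linarith
    have hx₀mem : ‖x₀‖ ≤ P ∧ R ≤ ‖x₀‖ := by
      rw [hKdef] at hx₀K
      exact ⟨mem_closedBall_zero_iff.mp hx₀K.1, hx₀K.2⟩
    have hx₀R : R < ‖x₀‖ := by
      rcases lt_or_eq_of_le hx₀mem.2 with h|h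
      · exact h
      · exfalso
        have h1 : φ x₀ = 2*η := hφboundary x₀ h.symm
        have h2 : 1 ≤ u x₀ := hbd x₀ h.symm
        have h3 : u x₀ - φ x₀ ≥ 1 - 2*η := by linarith
        linarith
    have hx₀P : ‖x₀‖ < P := by
      by_contra hge
      push_neg at hge
      have h1 := hfar x₀ hge
      have h2 : -|u x₀| ≤ u x₀ := neg_abs_le _
      linarith
    have hlocmin : IsLocalMin (fun y => u y - φ y) x₀ := by
      have hUopen : IsOpen ({y : E3 | R < ‖y‖} ∩ {y : E3 | ‖y‖ < P}) :=
        hsopen.inter (isOpen_lt continuous_norm continuous_const)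
      have hUmem : x₀ ∈ {y : E3 | R < ‖y‖} ∩ {y : E3 | ‖y‖ < P} := ⟨hx₀R, hx₀P⟩
      have hUsub : ({y : E3 | R < ‖y‖} ∩ {y : E3 | ‖y‖ < P}) ⊆ K := by
        rw [hKdef]
        intro y hy
        have h1 : R < ‖y‖ := hy.1
        have h2 : ‖y‖ < P := hy.2
        refine ⟨mem_closedBall_zero_iff.mpr h2.le, ?_⟩
        show R ≤ ‖y‖
        exact h1.le
      filter_upwards [hUopen.mem_nhds hUmem] with y hy
      exact hx₀min (hUsub hy)
    have hlap0 : 0 ≤ lap (fun y => u y - φ y) x₀ :=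
      lap_nonneg_of_isLocalMin hsopen hx₀R (hus.sub hφsmooth) hlocmin
    rw [lap_sub hsopen hx₀R hus hφsmooth] at hlap0
    rw [heq x₀ hx₀R, hlapφ x₀ hx₀R] at hlap0
    -- contradiction with the pointwise inequality
    have hbm : |b x₀| ≤ 1/2 * (‖x₀‖^4)⁻¹ := by
      have h1 := hb' x₀ hx₀R
      have h2 : ‖x₀‖ ^ (-β₁) ≤ ‖x₀‖ ^ (-(4:ℝ)) :=
        Real.rpow_le_rpow_of_exponent_le (by linarith) (by linarith)
      rw [rpow_neg4_eq (by linarith : (0:ℝ) < ‖x₀‖)] at h2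
      linarith
    have hP := pointP (show (1:ℝ) ≤ ‖x₀‖ by linarith) rfl hbm
      (show u x₀ < φ x₀ by linarith) (hφbound x₀ (le_of_lt hx₀R))
      (by positivity) h2c2 (hstep _ hx₀R)
    linarith
  -- conclude
  intro x hx
  have h1 : φ x ≤ u x := main x hx
  have hr0 : 0 < ‖x‖ := by linarith
  have h2 := hφval x hr0
  have h3 : η*R/‖x‖ ≤ φ x := by
    rw [h2]
    have h4 : 0 ≤ η*R^2/‖x‖^2 := by positivity
    linarith
  calc η*R/‖x‖ ≤ φ x := h3
    _ ≤ u x := h1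
    _ ≤ |u x| := le_abs_self _

end
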